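/- Let C be a ℤ/2-linear subspace of (ℤ/2)^N, and define the quotient graph Q_C on the quotient group (ℤ/2)^N / C by declaring two cosets a and b adjacent exactly when a ≠ b and b = a + ē_i for some i, where ē_i denotes the coset of the i-th standard basis vector e_i. Then Q_C is N-regular if and only if every nonzero element of C has Hamming weight at least 3 (equivalently, C has no codewords of weight 1 or 2). -/

import Mathlib

private lemma zmod2_neg : ∀ a : ZMod 2, -a = a := by decide
private lemma zmod2_add_self : ∀ a : ZMod 2, a + a = 0 := by decide
private lemma zmod2_eq_one : ∀ a : ZMod 2, a ≠ 0 → a = 1 := by decide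

private lemma card_range_diff_eq_iff {N : ℕ} {α : Type*} (f : Fin N → α) (v : α) :
    (Set.range f \ {v}).ncard = N ↔ Function.Injective f ∧ v ∉ Set.range f := by
  have hfin : (Set.range f).Finite := Set.finite_range f
  constructor
  · intro h
    have hv : v ∉ Set.range f := by
      intro hv
      have h1 : (Set.range f \ {v}).ncard = (Set.range f).ncard - 1 :=
        Set.ncard_diff_singleton_of_mem hv
      have h2 : 0 < (Set.range f).ncard := (Set.ncard_pos hfin).mpr ⟨v, hv⟩
      have hle : (Set.range f).ncard ≤ N := by
        rw [← Nat.card_coe_set_eq]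
        simpa using Finite.card_range_le f
      omega
    refine ⟨?_, hv⟩
    rw [Set.diff_singleton_eq_self hv] at h
    intro i j hij
    by_contra hne
    have hsub : Set.range f ⊆ f '' {k | k ≠ j} := by
      rintro _ ⟨k, rfl⟩
      rcases eq_or_ne k j with rfl | hk
      · exact ⟨i, hne, hij⟩
      · exact ⟨k, hk, rfl⟩
    have h1 : (Set.range f).ncard ≤ ({k : Fin N | k ≠ j}).ncard :=
      le_trans (Set.ncard_le_ncard hsub (hfin.subset (Set.image_subset_range _ _)))
        (Set.ncard_image_le (Set.toFinite _))
    have h2 : ({k : Fin N | k ≠ j}).ncard < N := by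
      have he : ({k : Fin N | k ≠ j}) = Set.univ \ {j} := by ext k; simp
      rw [he, Set.ncard_diff_singleton_of_mem (Set.mem_univ j),
        Set.ncard_univ]
      simp only [Nat.card_eq_fintype_card, Fintype.card_fin]
      have : 0 < N := Fin.pos j
      omega
    omega
  · rintro ⟨hinj, hv⟩
    rw [Set.diff_singleton_eq_self hv, ← Nat.card_coe_set_eq,
      Nat.card_range_of_injective hinj, Nat.card_eq_fintype_card, Fintype.card_fin]

/-- The quotient graph `Q_C` of the hypercube `Q_N` by a linear binary code `C`:
vertices are cosets in `(ℤ/2)^N / C`, and cosets `a ≠ b` are adjacent exactly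
when `b = a + ē_i` for some `i`, where `ē_i` is the coset of the `i`-th standard
basis vector. -/
def codeQuotientGraph {N : ℕ} (C : Submodule (ZMod 2) (Fin N → ZMod 2)) :
    SimpleGraph ((Fin N → ZMod 2) ⧸ C) :=
  SimpleGraph.fromRel
    (fun a b => ∃ i : Fin N, b = a + Submodule.Quotient.mk (Pi.single i 1))

private lemma neighborSet_eq {N : ℕ} (C : Submodule (ZMod 2) (Fin N → ZMod 2))
    (v : (Fin N → ZMod 2) ⧸ C) :
    (codeQuotientGraph C).neighborSet v =
      Set.range (fun i : Fin N => v + Submodule.Quotient.mk (Pi.single i 1)) \ {v} := by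
  ext b
  simp only [SimpleGraph.mem_neighborSet, codeQuotientGraph, SimpleGraph.fromRel_adj,
    Set.mem_diff, Set.mem_range, Set.mem_singleton_iff]
  have key : ∀ i : Fin N, (v = b + Submodule.Quotient.mk (Pi.single i 1)) ↔
      (b = v + Submodule.Quotient.mk (Pi.single i 1)) := by
    intro i
    have h0 : (Submodule.Quotient.mk (Pi.single i 1) : (Fin N → ZMod 2) ⧸ C)
        + Submodule.Quotient.mk (Pi.single i 1) = 0 := by
      rw [← Submodule.Quotient.mk_add, ← Submodule.Quotient.mk_zero C]
      congr 1
      funext k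
      exact zmod2_add_self _
    constructor
    · rintro rfl; rw [add_assoc, h0, add_zero]
    · rintro rfl; rw [add_assoc, h0, add_zero]
  constructor
  · rintro ⟨hne, h | h⟩
    · obtain ⟨i, hi⟩ := h
      exact ⟨⟨i, hi.symm⟩, Ne.symm hne⟩
    · obtain ⟨i, hi⟩ := h
      exact ⟨⟨i, ((key i).mp hi).symm⟩, Ne.symm hne⟩
  · rintro ⟨⟨i, hi⟩, hne⟩
    exact ⟨Ne.symm hne, Or.inl ⟨i, hi.symm⟩⟩

/-- `Q_C` is `N`-regular if and only if every nonzero codeword of `C` has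
Hamming weight at least `3`. -/
theorem codeQuotientGraph_regular_iff {N : ℕ}
    (C : Submodule (ZMod 2) (Fin N → ZMod 2)) :
    (∀ v : (Fin N → ZMod 2) ⧸ C,
        Nat.card ((codeQuotientGraph C).neighborSet v) = N) ↔
      (∀ c ∈ C, c ≠ 0 → 3 ≤ hammingNorm c) := by
  classical
  have hneg : ∀ x : Fin N → ZMod 2, -x = x := fun x => funext fun k => zmod2_neg _
  have one_ne : (1 : ZMod 2) ≠ 0 := by decide
  -- the v-independent degree condition
  have key : ∀ v : (Fin N → ZMod 2) ⧸ C,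
      Nat.card ((codeQuotientGraph C).neighborSet v) = N ↔
        ((∀ i j : Fin N, Pi.single i 1 + Pi.single j 1 ∈ C → i = j) ∧
          ∀ i : Fin N, Pi.single i (1 : ZMod 2) ∉ C) := by
    intro v
    rw [Nat.card_coe_set_eq, neighborSet_eq C v, card_range_diff_eq_iff]
    have hmem : ∀ i j : Fin N,
        (v + Submodule.Quotient.mk (Pi.single i 1)
          = v + Submodule.Quotient.mk (Pi.single j 1)) ↔
        Pi.single i (1 : ZMod 2) + Pi.single j 1 ∈ C := by
      intro i j
      rw [add_right_inj, Submodule.Quotient.eq, sub_eq_add_neg, hneg]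
    have hv : ∀ i : Fin N,
        (v = v + Submodule.Quotient.mk (Pi.single i 1)) ↔
          Pi.single i (1 : ZMod 2) ∈ C := by
      intro i
      rw [left_eq_add, Submodule.Quotient.mk_eq_zero]
    constructor
    · rintro ⟨hinj, hrange⟩
      refine ⟨fun i j hij => hinj ((hmem i j).mpr hij), fun i hi => ?_⟩
      exact hrange ⟨i, ((hv i).mpr hi).symm⟩
    · rintro ⟨h1, h2⟩
      refine ⟨fun i j hij => h1 i j ((hmem i j).mp hij), ?_⟩
      rintro ⟨i, hi⟩
      exact h2 i ((hv i).mp hi.symm)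
  -- the code-theoretic equivalence
  have key2 : ((∀ i j : Fin N, Pi.single i 1 + Pi.single j 1 ∈ C → i = j) ∧
          ∀ i : Fin N, Pi.single i (1 : ZMod 2) ∉ C) ↔
        (∀ c ∈ C, c ≠ 0 → 3 ≤ hammingNorm c) := by
    constructor
    · rintro ⟨h1, h2⟩ c hc hc0
      by_contra hlt
      push_neg at hlt
      have hpos : 0 < hammingNorm c := hammingNorm_pos_iff.mpr hc0
      set s : Finset (Fin N) := Finset.univ.filter (fun i => c i ≠ 0) with hs
      have hnorm : hammingNorm c = s.card := by
        rw [hammingNorm, hs]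
      rw [hnorm] at hlt hpos
      interval_cases h : s.card
      · -- card 1
        obtain ⟨i, hi⟩ := Finset.card_eq_one.mp h
        have hci : c i ≠ 0 := by
          have : i ∈ s := hi ▸ Finset.mem_singleton_self i
          simpa [hs] using this
        have hceq : c = Pi.single i 1 := by
          funext k
          by_cases hk : c k ≠ 0
          · have : k ∈ s := by simp [hs, hk]
            rw [hi, Finset.mem_singleton] at this
            subst this
            rw [Pi.single_eq_same, zmod2_eq_one _ hk]
          · push_neg at hk
            have hki : k ≠ i := by rintro rfl; exact hci hk
            rw [hk, Pi.single_eq_of_ne hki]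
        exact h2 i (hceq ▸ hc)
      · -- card 2
        obtain ⟨i, j, hij, hsij⟩ := Finset.card_eq_two.mp h
        have hci : c i ≠ 0 := by
          have : i ∈ s := by rw [hsij]; simp
          simpa [hs] using this
        have hcj : c j ≠ 0 := by
          have : j ∈ s := by rw [hsij]; simp
          simpa [hs] using this
        have hceq : c = Pi.single i 1 + Pi.single j 1 := by
          funext k
          by_cases hk : c k ≠ 0
          · have : k ∈ s := by simp [hs, hk]
            rw [hsij, Finset.mem_insert, Finset.mem_singleton] at this
            rcases this with rfl | rfl
            · rw [Pi.add_apply, Pi.single_eq_same, Pi.single_eq_of_ne hij,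
                add_zero, zmod2_eq_one _ hk]
            · rw [Pi.add_apply, Pi.single_eq_same, Pi.single_eq_of_ne hij.symm,
                zero_add, zmod2_eq_one _ hk]
          · push_neg at hk
            have hki : k ≠ i := by rintro rfl; exact hci hk
            have hkj : k ≠ j := by rintro rfl; exact hcj hk
            rw [hk, Pi.add_apply, Pi.single_eq_of_ne hki, Pi.single_eq_of_ne hkj, add_zero]
        exact hij (h1 i j (hceq ▸ hc))
    · intro h
      constructor
      · intro i j hij
        by_contra hne
        have hnz : (Pi.single i 1 + Pi.single j 1 : Fin N → ZMod 2) ≠ 0 := by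
          intro h0
          have := congrFun h0 i
          rw [Pi.add_apply, Pi.single_eq_same, Pi.single_eq_of_ne hne,
            add_zero, Pi.zero_apply] at this
          exact one_ne this
        have hle : hammingNorm (Pi.single i 1 + Pi.single j 1 : Fin N → ZMod 2) ≤ 2 := by
          rw [hammingNorm]
          refine le_trans (Finset.card_le_card (t := {i, j}) (fun k hk => ?_)) ?_
          · simp only [Finset.mem_filter, Finset.mem_univ, true_and] at hk
            by_contra hmem
            simp only [Finset.mem_insert, Finset.mem_singleton, not_or] at hmem
            rw [Pi.add_apply, Pi.single_eq_of_ne hmem.1, Pi.single_eq_of_ne hmem.2,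
              add_zero] at hk
            exact hk rfl
          · exact (Finset.card_insert_le i {j}).trans (by simp)
        have := h _ hij hnz
        omega
      · intro i hi
        have hnz : (Pi.single i 1 : Fin N → ZMod 2) ≠ 0 := by
          intro h0
          have := congrFun h0 i
          rw [Pi.single_eq_same, Pi.zero_apply] at this
          exact one_ne this
        have hle : hammingNorm (Pi.single i 1 : Fin N → ZMod 2) ≤ 1 := by
          rw [hammingNorm]
          refine le_trans (Finset.card_le_card (t := {i}) (fun k hk => ?_)) ?_
          · simp only [Finset.mem_filter, Finset.mem_univ, true_and] at hk
            by_contra hmem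
            rw [Finset.mem_singleton] at hmem
            rw [Pi.single_eq_of_ne hmem] at hk
            exact hk rfl
          · simp
        have := h _ hi hnz
        omega
  constructor
  · intro h
    exact key2.mp ((key 0).mp (h 0))
  · intro h v
    exact (key v).mpr (key2.mpr h)
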